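/- arXiv:0812.4807 — 8 statements merged into one kernel-verified Lean document; each statement's English description precedes it below -/
import Mathlib

section
/- Over the field k(x_1,x_2,x_3,x_4) with indeterminates x_i, if s_1^3 - 4 s_1 s_2 + 8 s_3 ≠ 0, then x_1 = (s_1^2 s_2 - 4 s_2^2 + 4 s_1 s_3 - s_1^2 θ + 4θ^2 + (s_1^3 - 4 s_1 s_2 + 8 s_3) z_1 + (s_1^2 - 4 s_2 + 4θ) z_1^2) / (2(s_1^3 - 4 s_1 s_2 + 8 s_3)), where θ = x_1 x_3 + x_2 x_4 and z_1 = x_1 - x_3. -/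
set_option maxHeartbeats 1000000


open MvPolynomial

/-- The image of the indeterminate `xᵢ` in the rational function field `k(x₁,…,x₄)`. -/
noncomputable def xv (k : Type*) [Field k] (i : Fin 4) :
    FractionRing (MvPolynomial (Fin 4) k) :=
  algebraMap (MvPolynomial (Fin 4) k) (FractionRing (MvPolynomial (Fin 4) k)) (X i)

/-- In `k(x₁,…,x₄)` with char `k ≠ 2`, if `s₁³ - 4s₁s₂ + 8s₃ ≠ 0` then
`x₁ = (s₁²s₂ - 4s₂² + 4s₁s₃ - s₁²θ + 4θ² + (s₁³-4s₁s₂+8s₃)z₁ + (s₁²-4s₂+4θ)z₁²)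
      / (2(s₁³-4s₁s₂+8s₃))`,
where `θ = x₁x₃ + x₂x₄` and `z₁ = x₁ - x₃`. -/
theorem x1_formula {k : Type*} [Field k] (h2 : (2 : k) ≠ 0)
    (s1 s2 s3 θ z1 : FractionRing (MvPolynomial (Fin 4) k))
    (hs1 : s1 = xv k 0 + xv k 1 + xv k 2 + xv k 3)
    (hs2 : s2 = xv k 0 * xv k 1 + xv k 0 * xv k 2 + xv k 0 * xv k 3
      + xv k 1 * xv k 2 + xv k 1 * xv k 3 + xv k 2 * xv k 3)
    (hs3 : s3 = xv k 0 * xv k 1 * xv k 2 + xv k 0 * xv k 1 * xv k 3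
      + xv k 0 * xv k 2 * xv k 3 + xv k 1 * xv k 2 * xv k 3)
    (hθ : θ = xv k 0 * xv k 2 + xv k 1 * xv k 3)
    (hz : z1 = xv k 0 - xv k 2)
    (hd : s1 ^ 3 - 4 * s1 * s2 + 8 * s3 ≠ 0) :
    xv k 0 = (s1 ^ 2 * s2 - 4 * s2 ^ 2 + 4 * s1 * s3 - s1 ^ 2 * θ + 4 * θ ^ 2
        + (s1 ^ 3 - 4 * s1 * s2 + 8 * s3) * z1 + (s1 ^ 2 - 4 * s2 + 4 * θ) * z1 ^ 2)
      / (2 * (s1 ^ 3 - 4 * s1 * s2 + 8 * s3)) := by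
  have h2' : (2 : FractionRing (MvPolynomial (Fin 4) k)) ≠ 0 := by
    have := (map_ne_zero_iff (algebraMap k (FractionRing (MvPolynomial (Fin 4) k)))
      (algebraMap k (FractionRing (MvPolynomial (Fin 4) k))).injective).mpr h2
    rwa [map_ofNat] at this
  rw [eq_div_iff (mul_ne_zero h2' hd)]
  subst hs1 hs2 hs3 hθ hz
  ring
end

section
/- The 5-th cyclotomic polynomial X^4 + X^3 + X^2 + X + 1 and the polynomial X^4 + 5X + 5 have the same splitting field over Q. -/
open Polynomial

theorem cyclo5_ne : (X ^ 4 + X ^ 3 + X ^ 2 + X + 1 : ℚ[X]) ≠ 0 := by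
  intro h
  have := congrArg (eval 0) h
  simp at this

theorem quart_ne : (X ^ 4 + 5 * X + 5 : ℚ[X]) ≠ 0 := by
  intro h
  have := congrArg (eval 0) h
  simp at this

/-- The 5th cyclotomic polynomial `X^4+X^3+X^2+X+1` and `X^4+5X+5` have the same
splitting field over `ℚ` (inside a fixed algebraic closure). -/
theorem cyclotomic5_splitting_field :
    IntermediateField.adjoin ℚ
        ((X ^ 4 + X ^ 3 + X ^ 2 + X + 1 : ℚ[X]).rootSet (AlgebraicClosure ℚ)) =
      IntermediateField.adjoin ℚ
        ((X ^ 4 + 5 * X + 5 : ℚ[X]).rootSet (AlgebraicClosure ℚ)) := by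
  apply le_antisymm
  · rw [IntermediateField.adjoin_le_iff]
    intro x hx
    rw [mem_rootSet] at hx
    have hx' : x ^ 4 + x ^ 3 + x ^ 2 + x + 1 = 0 := by
      have := hx.2
      simpa [map_ofNat] using this
    set y : AlgebraicClosure ℚ := x ^ 3 - x ^ 4 with hy
    have hgy : y ^ 4 + 5 * y + 5 = 0 := by
      rw [hy]
      linear_combination (5 - 5*x + 5*x^3 - 10*x^4 + 10*x^5 - 5*x^6 + 5*x^8
        - 10*x^9 + 10*x^10 - 5*x^11 + x^12) * hx'
    have hymem : y ∈ IntermediateField.adjoin ℚ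
        ((X ^ 4 + 5 * X + 5 : ℚ[X]).rootSet (AlgebraicClosure ℚ)) := by
      apply IntermediateField.subset_adjoin
      rw [mem_rootSet]
      refine ⟨quart_ne, ?_⟩
      simp [map_ofNat, hgy]
    have hxy : x = (16 + 4 * y - 3 * y ^ 2 + 5 * y ^ 3) / 11 := by
      rw [hy]
      linear_combination ((-16 + 27*x - 11*x^2 - 4*x^3 + 8*x^4 - 20*x^5 + 30*x^6
        - 20*x^7 + 5*x^8)/11) * hx'
    rw [hxy]
    refine div_mem (add_mem (sub_mem (add_mem ?_ ?_) ?_) ?_) ?_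
    · exact ofNat_mem _ 16
    · exact mul_mem (ofNat_mem _ 4) hymem
    · exact mul_mem (ofNat_mem _ 3) (pow_mem hymem 2)
    · exact mul_mem (ofNat_mem _ 5) (pow_mem hymem 3)
    · exact ofNat_mem _ 11
  · rw [IntermediateField.adjoin_le_iff]
    intro x hx
    rw [mem_rootSet] at hx
    have hx' : x ^ 4 + 5 * x + 5 = 0 := by
      have := hx.2
      simpa [map_ofNat] using this
    set y : AlgebraicClosure ℚ := (16 + 4 * x - 3 * x ^ 2 + 5 * x ^ 3) / 11 with hy
    have hfy : y ^ 4 + y ^ 3 + y ^ 2 + y + 1 = 0 := by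
      rw [hy]
      linear_combination ((35501 - 11473*x + 444*x^2 + 20063*x^3 - 7859*x^4
        + 2110*x^5 + 3350*x^6 - 1500*x^7 + 625*x^8)/14641) * hx'
    have hymem : y ∈ IntermediateField.adjoin ℚ
        ((X ^ 4 + X ^ 3 + X ^ 2 + X + 1 : ℚ[X]).rootSet (AlgebraicClosure ℚ)) := by
      apply IntermediateField.subset_adjoin
      rw [mem_rootSet]
      refine ⟨cyclo5_ne, ?_⟩
      simp [hfy]
    have hxy : x = y ^ 3 - y ^ 4 := by
      rw [hy]
      linear_combination ((4096 + 5181*x - 6717*x^2 + 10493*x^3 - 2909*x^4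
        - 640*x^5 + 3350*x^6 - 1500*x^7 + 625*x^8)/14641) * hx'
    rw [hxy]
    exact sub_mem (pow_mem hymem 3) (pow_mem hymem 4)
end

section
/- Let M be a field of characteristic not 2 and a, b in M with b(a^2 - 4b) ≠ 0. The polynomial X^4 + aX^2 + b is reducible over M if and only if a^2 - 4b is a square in M, or -a + 2√b is a square in M for some square root √b of b in M, or -a - 2√b is a square in M for some square root √b of b in M. -/
open Polynomial

private lemma monic_deg2_form {M : Type*} [Field M] {f : M[X]} (hf : f.Monic)
    (h : f.natDegree = 2) : f = X ^ 2 + C (f.coeff 1) * X + C (f.coeff 0) := by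
  have h2 : f.coeff 2 = 1 := by
    have := hf.coeff_natDegree; rwa [h] at this
  ext n
  match n with
  | 0 => simp
  | 1 => simp
  | 2 => simp [h2]
  | (n+3) =>
    have hlt : f.natDegree < n + 3 := by omega
    simp [coeff_eq_zero_of_natDegree_lt hlt, coeff_X, coeff_C, coeff_X_pow]

private lemma natDegree_quad {M : Type*} [Field M] (u v : M) :
    (X^2 + C u * X + C v : M[X]).natDegree = 2 := by
  have h : (X^2 + C u * X + C v : M[X]) = C 1 * X^2 + C u * X + C v := by rw [map_one, one_mul]
  rw [h]; exact natDegree_quadratic one_ne_zero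

private lemma not_irred_of_two_quads {M : Type*} [Field M] {p f g : M[X]} (h : p = f * g)
    (hf : f.natDegree = 2) (hg : g.natDegree = 2) : ¬ Irreducible p := by
  intro hi
  rcases hi.2 h with hu | hu
  · exact Polynomial.not_isUnit_of_natDegree_pos f (by omega) hu
  · exact Polynomial.not_isUnit_of_natDegree_pos g (by omega) hu

/-- Reducibility criterion for the biquadratic `X⁴+aX²+b` over a field of
characteristic ≠ 2 with `b(a²-4b) ≠ 0`. -/
theorem biquadratic_reducible_iff {M : Type*} [Field M] (h2 : (2 : M) ≠ 0)
    (a b : M) (hb : b * (a ^ 2 - 4 * b) ≠ 0) :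
    ¬ Irreducible (X ^ 4 + C a * X ^ 2 + C b : M[X]) ↔
      (∃ m : M, m ^ 2 = a ^ 2 - 4 * b) ∨
      (∃ r m : M, r ^ 2 = b ∧ m ^ 2 = -a + 2 * r) ∨
      (∃ r m : M, r ^ 2 = b ∧ m ^ 2 = -a - 2 * r) := by
  set P : M[X] := X ^ 4 + C a * X ^ 2 + C b with hPdef
  have hPmonic : P.Monic := by
    unfold P; monicity!
  have hPdeg : P.natDegree = 4 := by
    unfold P; compute_degree!
  constructor
  · -- forward direction
    intro hni
    have hP0 : P ≠ 0 := hPmonic.ne_zero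
    have hPu : ¬ IsUnit P := Polynomial.not_isUnit_of_natDegree_pos P (by omega)
    rw [irreducible_iff] at hni
    push_neg at hni
    obtain ⟨f, g, hfg, hfu, hgu⟩ := hni hPu
    have hf0 : f ≠ 0 := by rintro rfl; simp at hfg; exact hP0 hfg
    have hg0 : g ≠ 0 := by rintro rfl; simp at hfg; exact hP0 hfg
    have hdegs : f.natDegree + g.natDegree = 4 := by
      rw [← natDegree_mul hf0 hg0, ← hfg, hPdeg]
    have hposdeg : ∀ q : M[X], q ≠ 0 → ¬ IsUnit q → 0 < q.natDegree := by
      intro q hq0 hqu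
      rcases Nat.eq_zero_or_pos q.natDegree with h0 | h; swap; · exact h
      obtain ⟨c, rfl⟩ := Polynomial.natDegree_eq_zero.mp h0
      exact absurd (isUnit_C.mpr (isUnit_iff_ne_zero.mpr (by simpa using hq0))) hqu
    have hfpos := hposdeg f hf0 hfu
    have hgpos := hposdeg g hg0 hgu
    -- normalize to monic factors u * v with deg u ∈ {1,2}
    have key : ∃ u v : M[X], P = u * v ∧ u.Monic ∧ v.Monic ∧
        (u.natDegree = 1 ∨ u.natDegree = 2) ∧ u.natDegree + v.natDegree = 4 := by
      have hmk : ∀ f' g' : M[X], f' ≠ 0 → g' ≠ 0 → P = f' * g' →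
          ∃ u v : M[X], P = u * v ∧ u.Monic ∧ v.Monic ∧
            u.natDegree = f'.natDegree ∧ v.natDegree = g'.natDegree := by
        intro f' g' hf' hg' hP
        set c := f'.leadingCoeff with hc
        have hc0 : c ≠ 0 := leadingCoeff_ne_zero.mpr hf'
        have hcg : c * g'.leadingCoeff = 1 := by
          have := hPmonic
          rw [Monic, hP, leadingCoeff_mul] at this
          exact this
        refine ⟨C c⁻¹ * f', C c * g', ?_, ?_, ?_, ?_, ?_⟩
        · rw [hP]; rw [mul_mul_mul_comm, ← C_mul, inv_mul_cancel₀ hc0, map_one, one_mul]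
        · rw [Monic, leadingCoeff_mul, leadingCoeff_C]
          exact inv_mul_cancel₀ hc0
        · rw [Monic, leadingCoeff_mul, leadingCoeff_C]
          exact hcg
        · rw [natDegree_C_mul (inv_ne_zero hc0)]
        · rw [natDegree_C_mul hc0]
      rcases le_or_gt f.natDegree 2 with hle | hlt
      · obtain ⟨u, v, h1, h2', h3, h4, h5⟩ := hmk f g hf0 hg0 hfg
        exact ⟨u, v, h1, h2', h3, by omega, by omega⟩
      · obtain ⟨u, v, h1, h2', h3, h4, h5⟩ := hmk g f hg0 hf0 (by rw [hfg, mul_comm])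
        exact ⟨u, v, h1, h2', h3, by omega, by omega⟩
    obtain ⟨u, v, huv, hum, hvm, hud, hsum⟩ := key
    rcases hud with hu1 | hu2
    · -- linear factor case: P has a root
      have hu : u = X + C (u.coeff 0) := hum.eq_X_add_C hu1
      set t : M := -(u.coeff 0) with ht
      have heval : P.eval t = 0 := by
        rw [huv, eval_mul, hu]
        simp [ht]
      have ht' : t ^ 4 + a * t ^ 2 + b = 0 := by
        rw [hPdef] at heval; simpa using heval
      exact Or.inl ⟨2 * t ^ 2 + a, by linear_combination 4 * ht'⟩
    · -- two quadratic factors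
      have hv2 : v.natDegree = 2 := by omega
      set p1 := u.coeff 1; set p0 := u.coeff 0
      set r1 := v.coeff 1; set r0 := v.coeff 0
      have hu := monic_deg2_form hum hu2
      have hv := monic_deg2_form hvm hv2
      have heq : X ^ 4 + C a * X ^ 2 + C b
          = X ^ 4 + C (p1 + r1) * X ^ 3 + C (p0 + r0 + p1 * r1) * X ^ 2
            + C (p1 * r0 + p0 * r1) * X + C (p0 * r0) := by
        rw [hPdef] at huv
        rw [huv, hu, hv]
        simp only [map_add, map_mul]
        ring
      have e3 := congrArg (fun q => Polynomial.coeff q 3) heq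
      have e2 := congrArg (fun q => Polynomial.coeff q 2) heq
      have e1 := congrArg (fun q => Polynomial.coeff q 1) heq
      have e0 := congrArg (fun q => Polynomial.coeff q 0) heq
      simp only [coeff_add, coeff_C_mul, coeff_X_pow, coeff_C, coeff_X] at e3 e2 e1 e0
      norm_num at e3 e2 e1 e0
      -- e3 : 0 = p1 + r1, e2 : a = p0 + r0 + p1 * r1,
      -- e1 : 0 = p1 * r0 + p0 * r1, e0 : b = p0 * r0
      have hr1 : r1 = -p1 := by linear_combination -e3
      have e1' : p1 * (r0 - p0) = 0 := by linear_combination -e1 - p0 * hr1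
      rcases mul_eq_zero.mp e1' with hp1 | hr0
      · refine Or.inl ⟨p0 - r0, ?_⟩
        have ha' : p0 + r0 = a := by linear_combination -e2 - r1 * hp1
        linear_combination (p0 + r0 + a) * ha' + 4 * e0
      · have hr0' : r0 - p0 = 0 := hr0
        refine Or.inr (Or.inl ⟨p0, p1, ?_, ?_⟩)
        · linear_combination -e0 - p0 * hr0'
        · linear_combination e2 + p1 * hr1 + hr0'
  · -- backward direction
    rintro (⟨m, hm⟩ | ⟨r, m, hr, hm⟩ | ⟨r, m, hr, hm⟩)
    · -- split as (X²+Cu)(X²+Cv)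
      set u : M := (a + m) / 2 with hu
      set v : M := (a - m) / 2 with hv
      have hsum : u + v = a := by rw [hu, hv]; field_simp; ring
      have hprod : u * v = b := by
        rw [hu, hv]; field_simp
        linear_combination -hm
      refine not_irred_of_two_quads (f := X^2 + C 0 * X + C u) (g := X^2 + C 0 * X + C v)
        ?_ (natDegree_quad 0 u) (natDegree_quad 0 v)
      rw [hPdef, ← hsum, ← hprod]
      simp only [map_add, map_mul, map_zero]
      ring
    · refine not_irred_of_two_quads (f := X^2 + C m * X + C r) (g := X^2 + C (-m) * X + C r)
        ?_ (natDegree_quad m r) (natDegree_quad (-m) r)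
      rw [hPdef, show a = 2 * r - m ^ 2 by linear_combination hm, ← hr]
      simp only [map_add, map_mul, map_sub, map_neg, map_ofNat, map_pow]
      ring
    · refine not_irred_of_two_quads (f := X^2 + C m * X + C (-r)) (g := X^2 + C (-m) * X + C (-r))
        ?_ (natDegree_quad m (-r)) (natDegree_quad (-m) (-r))
      rw [hPdef, show a = 2 * (-r) - m ^ 2 by linear_combination hm,
        show b = (-r) ^ 2 by linear_combination -hr]
      simp only [map_add, map_mul, map_sub, map_neg, map_ofNat, map_pow]
      ring
end

section
/- Let M be a field of characteristic not 2 and a, b in M with b(a^2 - 4b) ≠ 0, and let f(X) = X^4 + aX^2 + b. For any y, w in M such that bw^2 - awy + y^2 ≠ 0 and the resulting quartic is separable, the splitting field over M of X^4 + a'X^2 + b' with a' = a^3w^2 - 3abw^2 - 2a^2wy + 4bwy + ay^2 and b' = b(bw^2 - awy + y^2)^2 is contained in the splitting field of f over M. -/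
open Polynomial

/-- The splitting field of the Tschirnhausen transform
`X⁴ + a'X² + b'` (with `a' = a³w²-3abw²-2a²wy+4bwy+ay²`,
`b' = b(bw²-awy+y²)²`) is contained in the splitting field of `X⁴+aX²+b`. -/
theorem tschirnhausen_splitting_field_le {M : Type*} [Field M] (h2 : (2 : M) ≠ 0)
    (a b y w : M) (hb : b * (a ^ 2 - 4 * b) ≠ 0)
    (hyw : b * w ^ 2 - a * w * y + y ^ 2 ≠ 0)
    (hsep : (X ^ 4 + C (a ^ 3 * w ^ 2 - 3 * a * b * w ^ 2 - 2 * a ^ 2 * w * y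
        + 4 * b * w * y + a * y ^ 2) * X ^ 2
        + C (b * (b * w ^ 2 - a * w * y + y ^ 2) ^ 2) : M[X]).Separable) :
    IntermediateField.adjoin M
        ((X ^ 4 + C (a ^ 3 * w ^ 2 - 3 * a * b * w ^ 2 - 2 * a ^ 2 * w * y
            + 4 * b * w * y + a * y ^ 2) * X ^ 2
          + C (b * (b * w ^ 2 - a * w * y + y ^ 2) ^ 2) : M[X]).rootSet
          (AlgebraicClosure M)) ≤
      IntermediateField.adjoin M
        ((X ^ 4 + C a * X ^ 2 + C b : M[X]).rootSet (AlgebraicClosure M)) := by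
  set K := AlgebraicClosure M with hK
  set A : M →+* K := algebraMap M K with hA
  rw [IntermediateField.adjoin_le_iff]
  intro z hz
  have hb0 : b ≠ 0 := left_ne_zero_of_mul hb
  have hAb : A b ≠ 0 := fun h => hb0 (A.injective (h.trans (map_zero A).symm))
  -- a root α of f in K
  have hdeg : (X ^ 4 + C (A a) * X ^ 2 + C (A b) : K[X]).degree = 4 := by
    compute_degree!
  obtain ⟨α, hα⟩ := IsAlgClosed.exists_root
    (X ^ 4 + C (A a) * X ^ 2 + C (A b) : K[X]) (by rw [hdeg]; decide)
  have hα' : α ^ 4 + A a * α ^ 2 + A b = 0 := by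
    simpa [IsRoot] using hα
  have hα0 : α ≠ 0 := by
    intro h
    apply hAb
    simpa [h] using hα'
  -- β with β² = A b / α²
  obtain ⟨β, hβ2⟩ := IsAlgClosed.exists_pow_nat_eq (A b / α ^ 2) (n := 2) (by norm_num)
  have e1 : α ^ 2 * β ^ 2 = A b := by
    rw [hβ2]; exact mul_div_cancel₀ _ (pow_ne_zero 2 hα0)
  have e2 : α ^ 2 + β ^ 2 = -A a := by
    rw [hβ2, div_eq_mul_inv]; linear_combination (α ^ 2)⁻¹ * hα' - (α ^ 2 + A a) * mul_inv_cancel₀ (pow_ne_zero 2 hα0)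
  have hβ' : β ^ 4 + A a * β ^ 2 + A b = 0 := by
    linear_combination β ^ 2 * e2 - e1
  -- f ≠ 0
  have hf0 : (X ^ 4 + C a * X ^ 2 + C b : M[X]) ≠ 0 := by
    intro h
    have h4 := congrArg (fun p => coeff p 4) h
    simp [coeff_one, coeff_C, coeff_X_pow] at h4
  set F := IntermediateField.adjoin M
      ((X ^ 4 + C a * X ^ 2 + C b : M[X]).rootSet K) with hF
  have hmem : ∀ γ : K, γ ^ 4 + A a * γ ^ 2 + A b = 0 → γ ∈ F := by
    intro γ hγ
    apply IntermediateField.subset_adjoin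
    rw [Polynomial.mem_rootSet]
    refine ⟨hf0, ?_⟩
    simp only [map_add, map_mul, map_pow, aeval_X, aeval_C]
    exact hγ
  have hαF : α ∈ F := hmem α hα'
  have hβF : β ∈ F := hmem β hβ'
  -- u, v
  set u : K := A y * α + A w * α ^ 3 with hu
  set v : K := A y * β + A w * β ^ 3 with hv
  have huF : u ∈ F := F.add_mem (F.mul_mem (F.algebraMap_mem y) hαF)
    (F.mul_mem (F.algebraMap_mem w) (pow_mem hαF 3))
  have hvF : v ∈ F := F.add_mem (F.mul_mem (F.algebraMap_mem y) hβF)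
    (F.mul_mem (F.algebraMap_mem w) (pow_mem hβF 3))
  -- z is a root of g
  rw [Polynomial.mem_rootSet] at hz
  have hz' := hz.2
  simp only [map_add, map_mul, map_pow, aeval_X, aeval_C, map_sub, map_ofNat, ← hA] at hz'
  -- key identities
  have hQ : (A y + A w * α ^ 2) * (A y + A w * β ^ 2)
      = A y ^ 2 - A a * A y * A w + A b * A w ^ 2 := by
    linear_combination (A w) ^ 2 * e1 + A y * A w * e2
  have k2 : u ^ 2 * v ^ 2 = A b * (A b * A w ^ 2 - A a * A w * A y + A y ^ 2) ^ 2 := by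
    have expand : u ^ 2 * v ^ 2
        = α ^ 2 * β ^ 2 * ((A y + A w * α ^ 2) * (A y + A w * β ^ 2)) ^ 2 := by
      rw [hu, hv]; ring
    rw [expand, e1, hQ]; ring
  have k1 : u ^ 2 + v ^ 2 = -(A a ^ 3 * A w ^ 2 - 3 * A a * A b * A w ^ 2
      - 2 * A a ^ 2 * A w * A y + 4 * A b * A w * A y + A a * A y ^ 2) := by
    linear_combination (A y ^ 2 + 2 * A y * A w * (α ^ 2 + β ^ 2 - A a)
        + A w ^ 2 * ((α ^ 2 + β ^ 2) ^ 2 - A a * (α ^ 2 + β ^ 2) + A a ^ 2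
          - 3 * α ^ 2 * β ^ 2)) * e2
      + (-4 * A y * A w + 3 * A a * A w ^ 2) * e1
  have hprod : (z - u) * (z + u) * ((z - v) * (z + v)) = 0 := by
    linear_combination hz' - z ^ 2 * k1 + k2
  rcases mul_eq_zero.mp hprod with h | h
  · rcases mul_eq_zero.mp h with h | h
    · rw [sub_eq_zero] at h; rw [h]; exact huF
    · rw [eq_neg_of_add_eq_zero_left h]; exact F.neg_mem huF
  · rcases mul_eq_zero.mp h with h | h
    · rw [sub_eq_zero] at h; rw [h]; exact hvF
    · rw [eq_neg_of_add_eq_zero_left h]; exact F.neg_mem hvF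
end

section
/- For a field M of characteristic not 2 containing a and b with f(X) = X^4 + bX + b separable over M (b ≠ 0, 256b ≠ 27b^2), the quartics X^4 + bX + b and X^4 + 2bX^2 + b^2 X + b^2 have the same splitting field over M. -/
open Polynomial

/-- The quartics `X⁴+bX+b` and `X⁴+2bX²+b²X+b²` have the same splitting field over
a field `M` of characteristic ≠ 2, when `X⁴+bX+b` is separable
(`b ≠ 0`, `256b ≠ 27b²`). -/
theorem s4_example_splitting_field {M : Type*} [Field M] (h2 : (2 : M) ≠ 0)
    (b : M) (hb : b ≠ 0) (hb' : 256 * b ≠ 27 * b ^ 2) :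
    IntermediateField.adjoin M
        ((X ^ 4 + C b * X + C b : M[X]).rootSet (AlgebraicClosure M)) =
      IntermediateField.adjoin M
        ((X ^ 4 + C (2 * b) * X ^ 2 + C (b ^ 2) * X + C (b ^ 2) : M[X]).rootSet
          (AlgebraicClosure M)) := by
  set K := AlgebraicClosure M
  set β : K := algebraMap M K b with hβdef
  have hβ : β ≠ 0 := fun h => hb ((algebraMap M K).injective (h.trans (map_zero _).symm))
  have hf : (X ^ 4 + C b * X + C b : M[X]) ≠ 0 := by
    intro h
    have := congrArg (fun p => p.coeff 4) h
    simp [coeff_X_pow, mul_assoc, coeff_C_mul, -map_pow] at this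
  have hg : (X ^ 4 + C (2 * b) * X ^ 2 + C (b ^ 2) * X + C (b ^ 2) : M[X]) ≠ 0 := by
    intro h
    have := congrArg (fun p => p.coeff 4) h
    simp [coeff_X_pow, mul_assoc, coeff_C_mul, -map_pow] at this
  apply le_antisymm
  · rw [IntermediateField.adjoin_le_iff]
    intro x hx
    rw [mem_rootSet] at hx
    have hfx : x ^ 4 + β * x + β = 0 := by
      have := hx.2
      simpa [hβdef] using this
    set y : K := -x ^ 2 with hy
    have hgy : y ∈ (X ^ 4 + C (2 * b) * X ^ 2 + C (b ^ 2) * X + C (b ^ 2) : M[X]).rootSet K := by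
      rw [mem_rootSet]
      refine ⟨hg, ?_⟩
      have : y ^ 4 + 2 * β * y ^ 2 + β ^ 2 * y + β ^ 2 = 0 := by
        rw [hy]
        linear_combination (x ^ 4 - β * x + β) * hfx
      simpa [hβdef, map_ofNat] using this
    have hxy : x = -(y ^ 2 + β) / β := by
      rw [hy]
      field_simp
      linear_combination hfx
    rw [hxy]
    have hymem : y ∈ IntermediateField.adjoin M
        ((X ^ 4 + C (2 * b) * X ^ 2 + C (b ^ 2) * X + C (b ^ 2) : M[X]).rootSet K) :=
      IntermediateField.subset_adjoin M _ hgy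
    have hβmem : β ∈ IntermediateField.adjoin M
        ((X ^ 4 + C (2 * b) * X ^ 2 + C (b ^ 2) * X + C (b ^ 2) : M[X]).rootSet K) :=
      IntermediateField.algebraMap_mem _ b
    exact div_mem (neg_mem (add_mem (pow_mem hymem 2) hβmem)) hβmem
  · rw [IntermediateField.adjoin_le_iff]
    intro y hy
    rw [mem_rootSet] at hy
    have hgy : y ^ 4 + 2 * β * y ^ 2 + β ^ 2 * y + β ^ 2 = 0 := by
      have := hy.2
      simpa [hβdef, map_ofNat] using this
    set x : K := -(y ^ 2 + β) / β with hx
    have hfx : x ∈ (X ^ 4 + C b * X + C b : M[X]).rootSet K := by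
      rw [mem_rootSet]
      refine ⟨hf, ?_⟩
      have : x ^ 4 + β * x + β = 0 := by
        rw [hx]
        have key : ∀ (y β : AlgebraicClosure M), β ≠ 0 →
            y ^ 4 + 2 * β * y ^ 2 + β ^ 2 * y + β ^ 2 = 0 →
            (-(y ^ 2 + β) / β) ^ 4 + β * (-(y ^ 2 + β) / β) + β = 0 := by
          intro y β hβ hgy
          field_simp
          linear_combination (y ^ 4 + 2 * β * y ^ 2 - β ^ 2 * y + β ^ 2) * hgy
        exact key y β hβ hgy
      simpa [hβdef] using this
    have hyx : y = -x ^ 2 := by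
      rw [hx]
      field_simp
      linear_combination hgy
    rw [hyx]
    have hxmem : x ∈ IntermediateField.adjoin M
        ((X ^ 4 + C b * X + C b : M[X]).rootSet K) :=
      IntermediateField.subset_adjoin M _ hfx
    exact neg_mem (pow_mem hxmem 2)
end

section
/- Let M be a field of characteristic not 2 and i ∈ M a primitive 4th root of unity. Let a, c ∈ M with ac ≠ 0 and c^2 + 4 ≠ 0. Then Resultant_X( X^4 + aX^2 + a^2/(c^2+4), Y - ( ((c+i)(c-2i)/c) X + ((c^2+4)/(ac)) X^3 ) ) = Y^4 - a^2 (c-2i)/(c+2i), as polynomials in Y. In particular X^4 + aX^2 + a^2/(c^2+4) and X^4 - a^2(c-2i)/(c+2i) have the same splitting field over M. -/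
open Polynomial

/-- Auxiliary: the quartet of values `±(A r + B r³)`, `±(A s + B s³)` are the roots
of `X⁴ - D`. -/
private lemma c4_quartet_aux {K : Type*} [Field K] (a c i A B b D r s : K)
    (hi : i ^ 2 = -1) (ha : a ≠ 0) (hc : c ≠ 0) (h4 : c ^ 2 + 4 ≠ 0)
    (hp : 2 * i + c ≠ 0)
    (hA : c * A = (c + i) * (c - 2 * i)) (hB : a * c * B = c ^ 2 + 4)
    (hb : b * (c ^ 2 + 4) = a ^ 2) (hD : D * (2 * i + c) = a ^ 2 * (c - 2 * i))
    (h1 : r ^ 2 + s ^ 2 = -a) (h2 : r ^ 2 * s ^ 2 = b) :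
    ((X : K[X]) - C (A * r + B * r ^ 3)) * (X - C (A * -r + B * (-r) ^ 3)) *
      (X - C (A * s + B * s ^ 3)) * (X - C (A * -s + B * (-s) ^ 3)) =
      X ^ 4 - C D := by
  have q2 : (r ^ 2) ^ 2 + (s ^ 2) ^ 2 = a ^ 2 - 2 * b := by
    linear_combination (r ^ 2 + s ^ 2 - a) * h1 - 2 * h2
  have q3 : (r ^ 2) ^ 3 + (s ^ 2) ^ 3 = -(a ^ 3) + 3 * a * b := by
    linear_combination ((r ^ 2 + s ^ 2) ^ 2 - a * (r ^ 2 + s ^ 2) + a ^ 2 - 3 * (r ^ 2 * s ^ 2)) * h1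
      + 3 * a * h2
  have hm : ((c ^ 2 + 4) * (a * c) ^ 2 * c ^ 2) ≠ 0 :=
    mul_ne_zero (mul_ne_zero h4 (pow_ne_zero 2 (mul_ne_zero ha hc))) (pow_ne_zero 2 hc)
  have CI2 : A ^ 2 * (-a) + 2 * A * B * (a ^ 2 - 2 * b) + B ^ 2 * (-(a ^ 3) + 3 * a * b) = 0 := by
    have h := mul_eq_zero.mp (show ((c ^ 2 + 4) * (a * c) ^ 2 * c ^ 2) *
        (A ^ 2 * (-a) + 2 * A * B * (a ^ 2 - 2 * b) + B ^ 2 * (-(a ^ 3) + 3 * a * b)) = 0 by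
      linear_combination (- 4*a^2*c^4*A*B + 3*a^3*c^4*B^2) * hb +
        (- 4*a^3*c^2 + 4*a^3*c^3*A - 5*a^3*c^4 + 2*a^3*c^5*A - a^3*c^6 - a^4*c^3*B - a^4*c^5*B) * hB +
        (16*a^3*c^2 + 8*a^3*c^2*i^2 - 4*a^3*c^3*A + 4*a^3*c^3*i + 8*a^3*c^4 + 2*a^3*c^4*i^2 - a^3*c^5*A + a^3*c^5*i + a^3*c^6) * hA +
        (- 16*a^3*c^2 - 16*a^3*c^2*i^2 - 16*a^3*c^3*i - 8*a^3*c^4 - 4*a^3*c^4*i^2 - 4*a^3*c^5*i - a^3*c^6) * hi)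
    exact h.resolve_left hm
  have S2 : (A * r + B * r ^ 3) ^ 2 + (A * s + B * s ^ 3) ^ 2 = 0 := by
    linear_combination A ^ 2 * h1 + 2 * A * B * q2 + B ^ 2 * q3 + CI2
  have hE : A ^ 2 - A * B * a + B ^ 2 * b = -i * (c - 2 * i) := by
    apply mul_left_cancel₀ hm
    linear_combination (a^2*c^4*B^2) * hb +
      (4*a^2*c^2 - 4*a^2*c^3*A + a^2*c^4 - a^2*c^5*A + a^3*c^3*B) * hB +
      (- 16*a^2*c^2 - 8*a^2*c^2*i^2 + 4*a^2*c^3*A - 4*a^2*c^3*i - 4*a^2*c^4 - 2*a^2*c^4*i^2 + a^2*c^5*A - a^2*c^5*i) * hA +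
      (16*a^2*c^2 + 16*a^2*c^2*i^2 + 16*a^2*c^3*i - 8*a^2*c^4 + 4*a^2*c^4*i^2 + 4*a^2*c^5*i - 3*a^2*c^6) * hi
  have m1 : (A + B * r ^ 2) * (A + B * s ^ 2) = -i * (c - 2 * i) := by
    linear_combination A * B * h1 + B ^ 2 * h2 + hE
  have S4 : (A * r + B * r ^ 3) ^ 2 * (A * s + B * s ^ 3) ^ 2 = -D := by
    have e1 : (A * r + B * r ^ 3) ^ 2 * (A * s + B * s ^ 3) ^ 2 =
        (r ^ 2 * s ^ 2) * ((A + B * r ^ 2) * (A + B * s ^ 2)) ^ 2 := by ring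
    rw [e1, m1, h2]
    apply mul_left_cancel₀ (mul_ne_zero hp h4)
    linear_combination (4 + c^2) * hD +
      (8*i^5 - 4*c*i^4 - 2*c^2*i^3 + c^3*i^2) * hb +
      (- 8*a^2*i + 8*a^2*i^3 + 4*a^2*c - 4*a^2*c*i^2 - 2*a^2*c^2*i + a^2*c^3) * hi
  have S2C := congrArg (C : K → K[X]) S2
  have S4C := congrArg (C : K → K[X]) S4
  simp only [map_add, map_mul, map_pow, map_neg, map_zero] at S2C S4C ⊢
  linear_combination (-(X : K[X]) ^ 2) * S2C + S4C

/-- Auxiliary: a root `x` of `X⁴ + aX² + b` is recovered rationally from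
`y = A x + B x³`. -/
private lemma c4_recover_aux {K : Type*} [Field K] (a c i A B b x : K)
    (hi : i ^ 2 = -1) (ha : a ≠ 0) (hc : c ≠ 0) (h4 : c ^ 2 + 4 ≠ 0)
    (hA : c * A = (c + i) * (c - 2 * i)) (hB : a * c * B = c ^ 2 + 4)
    (hb : b * (c ^ 2 + 4) = a ^ 2)
    (hroot : x ^ 4 + a * x ^ 2 + b = 0) :
    x * ((c ^ 2 + 4) * (A * x + B * x ^ 3) ^ 2 - a * (c - 2 * i) ^ 2) =
      -2 * a * (c - 2 * i) * (A * x + B * x ^ 3) := by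
  have hm : ((c ^ 2 + 4) * (a * c) ^ 2 * c ^ 2) ≠ 0 :=
    mul_ne_zero (mul_ne_zero h4 (pow_ne_zero 2 (mul_ne_zero ha hc))) (pow_ne_zero 2 hc)
  apply mul_left_cancel₀ hm
  linear_combination (16*a^2*c^4*B^2*x^3 + 32*a^2*c^4*A*B*x + 8*a^2*c^6*B^2*x^3 + 16*a^2*c^6*A*B*x + a^2*c^8*B^2*x^3 + 2*a^2*c^8*A*B*x - 16*a^3*c^4*B^2*x - 8*a^3*c^6*B^2*x - a^3*c^8*B^2*x) * hroot +
      (- 4*a^2*c^4*B^2*x^3 - 8*a^2*c^4*A*B*x - a^2*c^6*B^2*x^3 - 2*a^2*c^6*A*B*x + 4*a^3*c^4*B^2*x + a^3*c^6*B^2*x) * hb +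
      (48*a^2*c^2*x^3 - 32*a^2*c^3*A*x^3 - 16*a^2*c^3*i*x^3 + 48*a^2*c^4*x^3 - 16*a^2*c^5*A*x^3 - 4*a^2*c^5*i*x^3 + 13*a^2*c^6*x^3 - 2*a^2*c^7*A*x^3 + a^2*c^8*x^3 + 16*a^3*c^2*x + 12*a^3*c^3*B*x^3 - 8*a^3*c^3*A*x + 8*a^3*c^4*x + 7*a^3*c^5*B*x^3 - 2*a^3*c^5*A*x + a^3*c^6*x + a^3*c^7*B*x^3 + 4*a^4*c^3*B*x + a^4*c^5*B*x) * hB +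
      (- 128*a^2*c^2*x^3 - 32*a^2*c^2*i^2*x^3 + 16*a^2*c^3*A*x^3 - 16*a^2*c^3*i*x^3 - 80*a^2*c^4*x^3 - 16*a^2*c^4*i^2*x^3 + 8*a^2*c^5*A*x^3 - 8*a^2*c^5*i*x^3 - 16*a^2*c^6*x^3 - 2*a^2*c^6*i^2*x^3 + a^2*c^7*A*x^3 - a^2*c^7*i*x^3 - a^2*c^8*x^3 - 32*a^3*c^2*x - 16*a^3*c^3*i*x - 8*a^3*c^4*x - 4*a^3*c^5*i*x) * hA +
      (192*a^2*c^2*x^3 + 64*a^2*c^2*i^2*x^3 + 64*a^2*c^3*i*x^3 + 112*a^2*c^4*x^3 + 32*a^2*c^4*i^2*x^3 + 32*a^2*c^5*i*x^3 + 20*a^2*c^6*x^3 + 4*a^2*c^6*i^2*x^3 + 4*a^2*c^7*i*x^3 + a^2*c^8*x^3 + 64*a^3*c^2*x + 32*a^3*c^3*i*x + 16*a^3*c^4*x + 8*a^3*c^5*i*x) * hi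

set_option maxHeartbeats 2000000 in
/-- With `i² = -1` in `M`, `ac ≠ 0`, `c²+4 ≠ 0`, and `x₁,…,x₄` the roots of
`f = X⁴+aX²+a²/(c²+4)` in an algebraic closure,
`Res_X(f(X), Y - (((c+i)(c-2i)/c)X + ((c²+4)/(ac))X³)) = ∏ⱼ (Y - g(xⱼ))`
equals `Y⁴ - a²(c-2i)/(c+2i)`; in particular the two quartics have the same
splitting field over `M`. -/
theorem c4_kummer_form {M : Type*} [Field M] (h2 : (2 : M) ≠ 0)
    (i a c : M) (hi : i ^ 2 = -1) (hac : a * c ≠ 0) (hc : c ^ 2 + 4 ≠ 0)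
    (x : Fin 4 → AlgebraicClosure M)
    (hx : (X ^ 4 + C a * X ^ 2 + C (a ^ 2 / (c ^ 2 + 4)) : M[X]).map
        (algebraMap M (AlgebraicClosure M)) = ∏ j, (X - C (x j))) :
    (∏ j, (X - C (algebraMap M (AlgebraicClosure M) ((c + i) * (c - 2 * i) / c) * x j
        + algebraMap M (AlgebraicClosure M) ((c ^ 2 + 4) / (a * c)) * x j ^ 3))) =
      (X ^ 4 - C (a ^ 2 * (c - 2 * i) / (c + 2 * i)) : M[X]).map
        (algebraMap M (AlgebraicClosure M)) ∧
    IntermediateField.adjoin M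
        ((X ^ 4 + C a * X ^ 2 + C (a ^ 2 / (c ^ 2 + 4)) : M[X]).rootSet
          (AlgebraicClosure M)) =
      IntermediateField.adjoin M
        ((X ^ 4 - C (a ^ 2 * (c - 2 * i) / (c + 2 * i)) : M[X]).rootSet
          (AlgebraicClosure M)) := by
  have ha : a ≠ 0 := fun h => hac (by rw [h, zero_mul])
  have hcne : c ≠ 0 := fun h => hac (by rw [h, mul_zero])
  have hfac : (c - 2 * i) * (c + 2 * i) = c ^ 2 + 4 := by linear_combination (-4 : M) * hi
  have hm2 : c - 2 * i ≠ 0 := fun h => hc (by rw [← hfac, h, zero_mul])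
  have hp2 : c + 2 * i ≠ 0 := fun h => hc (by rw [← hfac, h, mul_zero])
  have inj : Function.Injective (algebraMap M (AlgebraicClosure M)) := (algebraMap M (AlgebraicClosure M)).injective
  have mapne : ∀ m : M, m ≠ 0 → algebraMap M (AlgebraicClosure M) m ≠ 0 := fun m hm h0 =>
    hm (inj (by rw [h0, map_zero]))
  have ha' := mapne a ha
  have hc' := mapne c hcne
  -- push the algebra map through the basic identities
  have hi' : (algebraMap M (AlgebraicClosure M) i) ^ 2 = -1 := by
    have := congrArg (algebraMap M (AlgebraicClosure M)) hi
    simpa using this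
  have hA' : (algebraMap M (AlgebraicClosure M) c) * algebraMap M (AlgebraicClosure M) ((c + i) * (c - 2 * i) / c) =
      (algebraMap M (AlgebraicClosure M) c + algebraMap M (AlgebraicClosure M) i) * (algebraMap M (AlgebraicClosure M) c - 2 * algebraMap M (AlgebraicClosure M) i) := by
    have hm : c * ((c + i) * (c - 2 * i) / c) = (c + i) * (c - 2 * i) := by
      field_simp
    have := congrArg (algebraMap M (AlgebraicClosure M)) hm
    simpa [map_mul, map_add, map_sub, map_ofNat] using this
  have hB' : (algebraMap M (AlgebraicClosure M) a) * algebraMap M (AlgebraicClosure M) c * algebraMap M (AlgebraicClosure M) ((c ^ 2 + 4) / (a * c)) =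
      (algebraMap M (AlgebraicClosure M) c) ^ 2 + 4 := by
    have hm : a * c * ((c ^ 2 + 4) / (a * c)) = c ^ 2 + 4 := by
      field_simp
    have := congrArg (algebraMap M (AlgebraicClosure M)) hm
    simpa [map_mul, map_add, map_pow, map_ofNat] using this
  have hb' : algebraMap M (AlgebraicClosure M) (a ^ 2 / (c ^ 2 + 4)) * ((algebraMap M (AlgebraicClosure M) c) ^ 2 + 4) =
      (algebraMap M (AlgebraicClosure M) a) ^ 2 := by
    have hm : a ^ 2 / (c ^ 2 + 4) * (c ^ 2 + 4) = a ^ 2 := div_mul_cancel₀ _ hc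
    have := congrArg (algebraMap M (AlgebraicClosure M)) hm
    simpa [map_mul, map_add, map_pow, map_ofNat] using this
  have hD' : algebraMap M (AlgebraicClosure M) (a ^ 2 * (c - 2 * i) / (c + 2 * i)) *
      (2 * algebraMap M (AlgebraicClosure M) i + algebraMap M (AlgebraicClosure M) c) =
      (algebraMap M (AlgebraicClosure M) a) ^ 2 * (algebraMap M (AlgebraicClosure M) c - 2 * algebraMap M (AlgebraicClosure M) i) := by
    have hm : a ^ 2 * (c - 2 * i) / (c + 2 * i) * (2 * i + c) = a ^ 2 * (c - 2 * i) := by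
      rw [show (2 * i + c) = c + 2 * i by ring, div_mul_cancel₀ _ hp2]
    have := congrArg (algebraMap M (AlgebraicClosure M)) hm
    simpa [map_mul, map_add, map_sub, map_pow, map_ofNat] using this
  have h4K : (algebraMap M (AlgebraicClosure M) c) ^ 2 + 4 ≠ 0 := by
    have h0 := mapne (c ^ 2 + 4) hc
    simpa [map_add, map_pow, map_ofNat] using h0
  have hpK : 2 * algebraMap M (AlgebraicClosure M) i + algebraMap M (AlgebraicClosure M) c ≠ 0 := by
    have h0 := mapne (c + 2 * i) hp2
    rw [map_add, map_mul, map_ofNat] at h0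
    exact fun h => h0 (by linear_combination h)
  -- normalize hx
  rw [Fin.prod_univ_four] at hx
  have hxmap := hx
  simp only [Polynomial.map_add, Polynomial.map_mul, Polynomial.map_pow, Polynomial.map_X,
    Polynomial.map_C] at hx
  have hxprod := hx
  have hexp : ((X : (AlgebraicClosure M)[X]) - C (x 0)) * (X - C (x 1)) * (X - C (x 2)) * (X - C (x 3)) =
      X ^ 4 - C (x 0 + x 1 + x 2 + x 3) * X ^ 3
        + C (x 0 * x 1 + x 0 * x 2 + x 0 * x 3 + x 1 * x 2 + x 1 * x 3 + x 2 * x 3) * X ^ 2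
        - C (x 0 * x 1 * x 2 + x 0 * x 1 * x 3 + x 0 * x 2 * x 3 + x 1 * x 2 * x 3) * X
        + C (x 0 * x 1 * x 2 * x 3) := by
    simp only [map_add, map_mul]
    ring
  rw [hexp] at hx
  have E1 : x 0 + x 1 + x 2 + x 3 = 0 := by
    have h3 := congrArg (fun p => Polynomial.coeff p 3) hx
    simp only [Polynomial.coeff_add, Polynomial.coeff_sub, Polynomial.coeff_C_mul,
      Polynomial.coeff_X_pow, Polynomial.coeff_C, Polynomial.coeff_X] at h3
    norm_num at h3
    linear_combination h3
  have E2 : x 0 * x 1 + x 0 * x 2 + x 0 * x 3 + x 1 * x 2 + x 1 * x 3 + x 2 * x 3 =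
      algebraMap M (AlgebraicClosure M) a := by
    have h3 := congrArg (fun p => Polynomial.coeff p 2) hx
    simp only [Polynomial.coeff_add, Polynomial.coeff_sub, Polynomial.coeff_C_mul,
      Polynomial.coeff_X_pow, Polynomial.coeff_C, Polynomial.coeff_X] at h3
    norm_num at h3
    linear_combination -h3
  have E3 : x 0 * x 1 * x 2 + x 0 * x 1 * x 3 + x 0 * x 2 * x 3 + x 1 * x 2 * x 3 = 0 := by
    have h3 := congrArg (fun p => Polynomial.coeff p 1) hx
    simp only [Polynomial.coeff_add, Polynomial.coeff_sub, Polynomial.coeff_C_mul,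
      Polynomial.coeff_X_pow, Polynomial.coeff_C, Polynomial.coeff_X] at h3
    norm_num at h3
    linear_combination h3
  have E4 : x 0 * x 1 * x 2 * x 3 = algebraMap M (AlgebraicClosure M) (a ^ 2 / (c ^ 2 + 4)) := by
    have h3 := congrArg (fun p => Polynomial.coeff p 0) hx
    simp only [Polynomial.coeff_add, Polynomial.coeff_sub, Polynomial.coeff_C_mul,
      Polynomial.coeff_X_pow, Polynomial.coeff_C, Polynomial.coeff_X] at h3
    norm_num at h3
    rw [map_ofNat] at h3
    rw [div_eq_iff h4K] at h3
    exact mul_right_cancel₀ h4K (by linear_combination -h3 - hb')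
  -- the roots pair up into {r, -r, s, -s}
  have hsplit : (x 0 + x 1) * ((x 0 + x 2) * (x 1 + x 2)) = 0 := by
    linear_combination (x 0 * x 1 + x 0 * x 2 + x 1 * x 2) * E1 - E3
  -- part 1
  have hmapg : ((X ^ 4 - C (a ^ 2 * (c - 2 * i) / (c + 2 * i)) : M[X]).map (algebraMap M (AlgebraicClosure M))) =
      (X : (AlgebraicClosure M)[X]) ^ 4 - C (algebraMap M (AlgebraicClosure M) (a ^ 2 * (c - 2 * i) / (c + 2 * i))) := by
    simp only [Polynomial.map_sub, Polynomial.map_pow, Polynomial.map_X, Polynomial.map_C]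
  have hprod : (∏ j, ((X : (AlgebraicClosure M)[X]) - C (algebraMap M (AlgebraicClosure M) ((c + i) * (c - 2 * i) / c) * x j
        + algebraMap M (AlgebraicClosure M) ((c ^ 2 + 4) / (a * c)) * x j ^ 3))) =
      (X ^ 4 - C (a ^ 2 * (c - 2 * i) / (c + 2 * i)) : M[X]).map (algebraMap M (AlgebraicClosure M)) := by
    rw [Fin.prod_univ_four, hmapg]
    rcases mul_eq_zero.mp hsplit with h01 | h'
    · have hn1 : x 1 = -x 0 := by linear_combination h01
      have hn3 : x 3 = -x 2 := by linear_combination E1 - h01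
      rw [hn1, hn3] at E2 E4 ⊢
      have h1 : x 0 ^ 2 + x 2 ^ 2 = -algebraMap M (AlgebraicClosure M) a := by linear_combination -E2
      have h2 : x 0 ^ 2 * x 2 ^ 2 = algebraMap M (AlgebraicClosure M) (a ^ 2 / (c ^ 2 + 4)) := by
        linear_combination E4
      have key := c4_quartet_aux (algebraMap M (AlgebraicClosure M) a) (algebraMap M (AlgebraicClosure M) c) (algebraMap M (AlgebraicClosure M) i)
        (algebraMap M (AlgebraicClosure M) ((c + i) * (c - 2 * i) / c)) (algebraMap M (AlgebraicClosure M) ((c ^ 2 + 4) / (a * c)))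
        (algebraMap M (AlgebraicClosure M) (a ^ 2 / (c ^ 2 + 4))) (algebraMap M (AlgebraicClosure M) (a ^ 2 * (c - 2 * i) / (c + 2 * i)))
        (x 0) (x 2) hi' ha' hc' h4K hpK hA' hB' hb' hD' h1 h2
      linear_combination key
    rcases mul_eq_zero.mp h' with h02 | h12
    · have hn2 : x 2 = -x 0 := by linear_combination h02
      have hn3 : x 3 = -x 1 := by linear_combination E1 - h02
      rw [hn2, hn3] at E2 E4 ⊢
      have h1 : x 0 ^ 2 + x 1 ^ 2 = -algebraMap M (AlgebraicClosure M) a := by linear_combination -E2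
      have h2 : x 0 ^ 2 * x 1 ^ 2 = algebraMap M (AlgebraicClosure M) (a ^ 2 / (c ^ 2 + 4)) := by
        linear_combination E4
      have key := c4_quartet_aux (algebraMap M (AlgebraicClosure M) a) (algebraMap M (AlgebraicClosure M) c) (algebraMap M (AlgebraicClosure M) i)
        (algebraMap M (AlgebraicClosure M) ((c + i) * (c - 2 * i) / c)) (algebraMap M (AlgebraicClosure M) ((c ^ 2 + 4) / (a * c)))
        (algebraMap M (AlgebraicClosure M) (a ^ 2 / (c ^ 2 + 4))) (algebraMap M (AlgebraicClosure M) (a ^ 2 * (c - 2 * i) / (c + 2 * i)))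
        (x 0) (x 1) hi' ha' hc' h4K hpK hA' hB' hb' hD' h1 h2
      linear_combination key
    · have hn2 : x 2 = -x 1 := by linear_combination h12
      have hn3 : x 3 = -x 0 := by linear_combination E1 - h12
      rw [hn2, hn3] at E2 E4 ⊢
      have h1 : x 0 ^ 2 + x 1 ^ 2 = -algebraMap M (AlgebraicClosure M) a := by linear_combination -E2
      have h2 : x 0 ^ 2 * x 1 ^ 2 = algebraMap M (AlgebraicClosure M) (a ^ 2 / (c ^ 2 + 4)) := by
        linear_combination E4
      have key := c4_quartet_aux (algebraMap M (AlgebraicClosure M) a) (algebraMap M (AlgebraicClosure M) c) (algebraMap M (AlgebraicClosure M) i)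
        (algebraMap M (AlgebraicClosure M) ((c + i) * (c - 2 * i) / c)) (algebraMap M (AlgebraicClosure M) ((c ^ 2 + 4) / (a * c)))
        (algebraMap M (AlgebraicClosure M) (a ^ 2 / (c ^ 2 + 4))) (algebraMap M (AlgebraicClosure M) (a ^ 2 * (c - 2 * i) / (c + 2 * i)))
        (x 0) (x 1) hi' ha' hc' h4K hpK hA' hB' hb' hD' h1 h2
      linear_combination key
  refine ⟨hprod, ?_⟩
  -- part 2 : equality of splitting fields
  have hf0 : (X ^ 4 + C a * X ^ 2 + C (a ^ 2 / (c ^ 2 + 4)) : M[X]) ≠ 0 := by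
    intro h
    have h4 := congrArg (fun p => Polynomial.coeff p 4) h
    simp [Polynomial.coeff_X_pow, Polynomial.coeff_C] at h4
  have hg0 : (X ^ 4 - C (a ^ 2 * (c - 2 * i) / (c + 2 * i)) : M[X]) ≠ 0 := by
    intro h
    have h4 := congrArg (fun p => Polynomial.coeff p 4) h
    simp [Polynomial.coeff_X_pow, Polynomial.coeff_C] at h4
  have haevf : ∀ z : AlgebraicClosure M, (Polynomial.aeval z) (X ^ 4 + C a * X ^ 2 + C (a ^ 2 / (c ^ 2 + 4)) : M[X])
      = (z - x 0) * (z - x 1) * (z - x 2) * (z - x 3) := by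
    intro z
    rw [Polynomial.aeval_def, ← Polynomial.eval_map, hxmap]
    simp [Polynomial.eval_mul, Polynomial.eval_sub]
  have haevg : ∀ z : AlgebraicClosure M, (Polynomial.aeval z)
      (X ^ 4 - C (a ^ 2 * (c - 2 * i) / (c + 2 * i)) : M[X]) =
      (z - (algebraMap M (AlgebraicClosure M) ((c + i) * (c - 2 * i) / c) * x 0
          + algebraMap M (AlgebraicClosure M) ((c ^ 2 + 4) / (a * c)) * x 0 ^ 3)) *
      (z - (algebraMap M (AlgebraicClosure M) ((c + i) * (c - 2 * i) / c) * x 1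
          + algebraMap M (AlgebraicClosure M) ((c ^ 2 + 4) / (a * c)) * x 1 ^ 3)) *
      (z - (algebraMap M (AlgebraicClosure M) ((c + i) * (c - 2 * i) / c) * x 2
          + algebraMap M (AlgebraicClosure M) ((c ^ 2 + 4) / (a * c)) * x 2 ^ 3)) *
      (z - (algebraMap M (AlgebraicClosure M) ((c + i) * (c - 2 * i) / c) * x 3
          + algebraMap M (AlgebraicClosure M) ((c ^ 2 + 4) / (a * c)) * x 3 ^ 3)) := by
    intro z
    rw [Polynomial.aeval_def, ← Polynomial.eval_map, ← hprod, Fin.prod_univ_four]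
    simp [Polynomial.eval_mul, Polynomial.eval_sub]
  have hfset : (X ^ 4 + C a * X ^ 2 + C (a ^ 2 / (c ^ 2 + 4)) : M[X]).rootSet (AlgebraicClosure M) =
      {x 0, x 1, x 2, x 3} := by
    ext z
    rw [Polynomial.mem_rootSet]
    simp only [Set.mem_insert_iff, Set.mem_singleton_iff, hf0, ne_eq, not_false_iff, true_and,
      haevf z]
    simp [mul_eq_zero, sub_eq_zero, or_assoc]
  have hgset : (X ^ 4 - C (a ^ 2 * (c - 2 * i) / (c + 2 * i)) : M[X]).rootSet (AlgebraicClosure M) =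
      {algebraMap M (AlgebraicClosure M) ((c + i) * (c - 2 * i) / c) * x 0 + algebraMap M (AlgebraicClosure M) ((c ^ 2 + 4) / (a * c)) * x 0 ^ 3,
        algebraMap M (AlgebraicClosure M) ((c + i) * (c - 2 * i) / c) * x 1 + algebraMap M (AlgebraicClosure M) ((c ^ 2 + 4) / (a * c)) * x 1 ^ 3,
        algebraMap M (AlgebraicClosure M) ((c + i) * (c - 2 * i) / c) * x 2 + algebraMap M (AlgebraicClosure M) ((c ^ 2 + 4) / (a * c)) * x 2 ^ 3,
        algebraMap M (AlgebraicClosure M) ((c + i) * (c - 2 * i) / c) * x 3 + algebraMap M (AlgebraicClosure M) ((c ^ 2 + 4) / (a * c)) * x 3 ^ 3} := by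
    ext z
    rw [Polynomial.mem_rootSet]
    simp only [Set.mem_insert_iff, Set.mem_singleton_iff, hg0, ne_eq, not_false_iff, true_and,
      haevg z]
    simp [mul_eq_zero, sub_eq_zero, or_assoc]
  rw [hfset, hgset]
  set Y : Set (AlgebraicClosure M) := {algebraMap M (AlgebraicClosure M) ((c + i) * (c - 2 * i) / c) * x 0 + algebraMap M (AlgebraicClosure M) ((c ^ 2 + 4) / (a * c)) * x 0 ^ 3,
        algebraMap M (AlgebraicClosure M) ((c + i) * (c - 2 * i) / c) * x 1 + algebraMap M (AlgebraicClosure M) ((c ^ 2 + 4) / (a * c)) * x 1 ^ 3,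
        algebraMap M (AlgebraicClosure M) ((c + i) * (c - 2 * i) / c) * x 2 + algebraMap M (AlgebraicClosure M) ((c ^ 2 + 4) / (a * c)) * x 2 ^ 3,
        algebraMap M (AlgebraicClosure M) ((c + i) * (c - 2 * i) / c) * x 3 + algebraMap M (AlgebraicClosure M) ((c ^ 2 + 4) / (a * c)) * x 3 ^ 3} with hYdef
  have haef : ∀ z : AlgebraicClosure M, z ^ 4 + algebraMap M (AlgebraicClosure M) a * z ^ 2
      + algebraMap M (AlgebraicClosure M) (a ^ 2 / (c ^ 2 + 4))
      = (z - x 0) * (z - x 1) * (z - x 2) * (z - x 3) := by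
    intro z
    have h := haevf z
    simpa only [map_add, map_mul, map_pow, Polynomial.aeval_X, Polynomial.aeval_C] using h
  have hrec : ∀ z : AlgebraicClosure M,
      z ^ 4 + algebraMap M (AlgebraicClosure M) a * z ^ 2
        + algebraMap M (AlgebraicClosure M) (a ^ 2 / (c ^ 2 + 4)) = 0 →
      (algebraMap M (AlgebraicClosure M) ((c + i) * (c - 2 * i) / c) * z + algebraMap M (AlgebraicClosure M) ((c ^ 2 + 4) / (a * c)) * z ^ 3) ∈ Y →
      z ∈ IntermediateField.adjoin M Y := by
    intro z hz hyz
    have hyjS : (algebraMap M (AlgebraicClosure M) ((c + i) * (c - 2 * i) / c) * z + algebraMap M (AlgebraicClosure M) ((c ^ 2 + 4) / (a * c)) * z ^ 3) ∈ IntermediateField.adjoin M Y :=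
      IntermediateField.subset_adjoin M Y hyz
    have hid := c4_recover_aux (algebraMap M (AlgebraicClosure M) a)
      (algebraMap M (AlgebraicClosure M) c) (algebraMap M (AlgebraicClosure M) i)
      (algebraMap M (AlgebraicClosure M) ((c + i) * (c - 2 * i) / c)) (algebraMap M (AlgebraicClosure M) ((c ^ 2 + 4) / (a * c))) (algebraMap M (AlgebraicClosure M) (a ^ 2 / (c ^ 2 + 4))) z
      hi' ha' hc' h4K hA' hB' hb' hz
    obtain ⟨y, hydef⟩ : ∃ y', y' = algebraMap M (AlgebraicClosure M) ((c + i) * (c - 2 * i) / c) * z + algebraMap M (AlgebraicClosure M) ((c ^ 2 + 4) / (a * c)) * z ^ 3 := ⟨_, rfl⟩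
    obtain ⟨t, htdef⟩ : ∃ t', t' = ((algebraMap M (AlgebraicClosure M)) c ^ 2 + 4) * y ^ 2
        - algebraMap M (AlgebraicClosure M) a *
          (algebraMap M (AlgebraicClosure M) c - 2 * algebraMap M (AlgebraicClosure M) i) ^ 2 :=
      ⟨_, rfl⟩
    have hid' : z * t = -2 * algebraMap M (AlgebraicClosure M) a *
        (algebraMap M (AlgebraicClosure M) c - 2 * algebraMap M (AlgebraicClosure M) i) * y := by
      rw [htdef, hydef]
      exact hid
    have hyj : y ∈ IntermediateField.adjoin M Y := by rw [hydef]; exact hyjS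
    have hcm2' : algebraMap M (AlgebraicClosure M) c - 2 * algebraMap M (AlgebraicClosure M) i ≠ 0 := by
      intro h0
      apply mapne (c - 2 * i) hm2
      rw [map_sub, map_mul, map_ofNat]
      exact h0
    have h2' : (2 : AlgebraicClosure M) ≠ 0 := by
      intro h0
      apply mapne 2 h2
      rw [map_ofNat]
      exact h0
    have hne : -2 * algebraMap M (AlgebraicClosure M) a *
        (algebraMap M (AlgebraicClosure M) c - 2 * algebraMap M (AlgebraicClosure M) i) ≠ 0 :=
      mul_ne_zero (mul_ne_zero (neg_ne_zero.mpr h2') ha') hcm2'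
    have ht : t ≠ 0 := by
      intro h0
      have hy0 : y = 0 := by
        have hid2 := hid'
        rw [h0, mul_zero] at hid2
        exact (mul_eq_zero.mp hid2.symm).resolve_left hne
      rw [htdef, hy0] at h0
      have hcontra : algebraMap M (AlgebraicClosure M) a *
          (algebraMap M (AlgebraicClosure M) c - 2 * algebraMap M (AlgebraicClosure M) i) ^ 2 = 0 := by
        linear_combination -h0
      exact (mul_ne_zero ha' (pow_ne_zero 2 hcm2')) hcontra
    have hxj : z = (-2 * algebraMap M (AlgebraicClosure M) a *
        (algebraMap M (AlgebraicClosure M) c - 2 * algebraMap M (AlgebraicClosure M) i) * y) / t := by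
      rw [eq_div_iff ht]
      linear_combination hid'
    rw [hxj]
    have hcS : algebraMap M (AlgebraicClosure M) c ∈ IntermediateField.adjoin M Y :=
      IntermediateField.algebraMap_mem _ c
    have haS : algebraMap M (AlgebraicClosure M) a ∈ IntermediateField.adjoin M Y :=
      IntermediateField.algebraMap_mem _ a
    have hiS : algebraMap M (AlgebraicClosure M) i ∈ IntermediateField.adjoin M Y :=
      IntermediateField.algebraMap_mem _ i
    have h2S : (2 : AlgebraicClosure M) ∈ IntermediateField.adjoin M Y := by
      have hh := IntermediateField.algebraMap_mem (IntermediateField.adjoin M Y) (2 : M)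
      rwa [map_ofNat] at hh
    have h4S : (4 : AlgebraicClosure M) ∈ IntermediateField.adjoin M Y := by
      have hh := IntermediateField.algebraMap_mem (IntermediateField.adjoin M Y) (4 : M)
      rwa [map_ofNat] at hh
    have hcmiS : algebraMap M (AlgebraicClosure M) c - 2 * algebraMap M (AlgebraicClosure M) i ∈
        IntermediateField.adjoin M Y := sub_mem hcS (mul_mem h2S hiS)
    have hnum : -2 * algebraMap M (AlgebraicClosure M) a *
        (algebraMap M (AlgebraicClosure M) c - 2 * algebraMap M (AlgebraicClosure M) i) * y ∈
        IntermediateField.adjoin M Y :=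
      mul_mem (mul_mem (mul_mem (neg_mem h2S) haS) hcmiS) hyj
    have htS : t ∈ IntermediateField.adjoin M Y := by
      rw [htdef]
      exact sub_mem (mul_mem (add_mem (pow_mem hcS 2) h4S) (pow_mem hyj 2))
        (mul_mem haS (pow_mem hcmiS 2))
    exact div_mem hnum htS
  apply le_antisymm
  · rw [IntermediateField.adjoin_le_iff]
    rintro z hz
    simp only [Set.mem_insert_iff, Set.mem_singleton_iff] at hz
    rcases hz with rfl | rfl | rfl | rfl
    · exact hrec _ (by linear_combination haef (x 0)) (Set.mem_insert _ _)
    · exact hrec _ (by linear_combination haef (x 1))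
        (Set.mem_insert_of_mem _ (Set.mem_insert _ _))
    · exact hrec _ (by linear_combination haef (x 2))
        (Set.mem_insert_of_mem _ (Set.mem_insert_of_mem _ (Set.mem_insert _ _)))
    · exact hrec _ (by linear_combination haef (x 3))
        (Set.mem_insert_of_mem _ (Set.mem_insert_of_mem _ (Set.mem_insert_of_mem _ rfl)))
  · rw [IntermediateField.adjoin_le_iff]
    rintro z hz
    simp only [hYdef, Set.mem_insert_iff, Set.mem_singleton_iff] at hz
    have hxmem0 : x 0 ∈ IntermediateField.adjoin M ({x 0, x 1, x 2, x 3} : Set (AlgebraicClosure M)) :=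
      IntermediateField.subset_adjoin _ _ (Set.mem_insert _ _)
    have hxmem1 : x 1 ∈ IntermediateField.adjoin M ({x 0, x 1, x 2, x 3} : Set (AlgebraicClosure M)) :=
      IntermediateField.subset_adjoin _ _ (Set.mem_insert_of_mem _ (Set.mem_insert _ _))
    have hxmem2 : x 2 ∈ IntermediateField.adjoin M ({x 0, x 1, x 2, x 3} : Set (AlgebraicClosure M)) :=
      IntermediateField.subset_adjoin _ _
        (Set.mem_insert_of_mem _ (Set.mem_insert_of_mem _ (Set.mem_insert _ _)))
    have hxmem3 : x 3 ∈ IntermediateField.adjoin M ({x 0, x 1, x 2, x 3} : Set (AlgebraicClosure M)) :=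
      IntermediateField.subset_adjoin _ _
        (Set.mem_insert_of_mem _ (Set.mem_insert_of_mem _ (Set.mem_insert_of_mem _ rfl)))
    rcases hz with rfl | rfl | rfl | rfl
    · exact add_mem (mul_mem (IntermediateField.algebraMap_mem _ _) hxmem0)
        (mul_mem (IntermediateField.algebraMap_mem _ _) (pow_mem hxmem0 3))
    · exact add_mem (mul_mem (IntermediateField.algebraMap_mem _ _) hxmem1)
        (mul_mem (IntermediateField.algebraMap_mem _ _) (pow_mem hxmem1 3))
    · exact add_mem (mul_mem (IntermediateField.algebraMap_mem _ _) hxmem2)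
        (mul_mem (IntermediateField.algebraMap_mem _ _) (pow_mem hxmem2 3))
    · exact add_mem (mul_mem (IntermediateField.algebraMap_mem _ _) hxmem3)
        (mul_mem (IntermediateField.algebraMap_mem _ _) (pow_mem hxmem3 3))
end

section
/- Let M be a field of characteristic not 2 and n ∈ M with n^2 + 16 ≠ 0. Then the simplest quartic polynomial h_n(X) = X^4 - nX^3 - 6X^2 + nX + 1 and the polynomial H_n(X) = X^4 - (n^2+16)X^2 + 4(n^2+16) have the same splitting field over M. -/
open Polynomial

/-- The simplest quartic `hₙ(X) = X⁴-nX³-6X²+nX+1` and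
`Hₙ(X) = X⁴-(n²+16)X²+4(n²+16)` have the same splitting field over a field `M`
of characteristic ≠ 2 when `n²+16 ≠ 0`. -/
theorem simplest_quartic_splitting_field {M : Type*} [Field M] (h2 : (2 : M) ≠ 0)
    (n : M) (hn : n ^ 2 + 16 ≠ 0) :
    IntermediateField.adjoin M
        ((X ^ 4 - C n * X ^ 3 - C 6 * X ^ 2 + C n * X + C 1 : M[X]).rootSet
          (AlgebraicClosure M)) =
      IntermediateField.adjoin M
        ((X ^ 4 - C (n ^ 2 + 16) * X ^ 2 + C (4 * (n ^ 2 + 16)) : M[X]).rootSet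
          (AlgebraicClosure M)) := by
  set K := AlgebraicClosure M with hK
  set hp : M[X] := X ^ 4 - C n * X ^ 3 - C 6 * X ^ 2 + C n * X + C 1 with hhp
  set Hp : M[X] := X ^ 4 - C (n ^ 2 + 16) * X ^ 2 + C (4 * (n ^ 2 + 16)) with hHp
  set a : K := algebraMap M K n with ha
  have hinj : Function.Injective (algebraMap M K) := (algebraMap M K).injective
  have h2K : (2 : K) ≠ 0 := by
    have h : algebraMap M K 2 = (2 : K) := map_ofNat _ 2
    rw [← h]
    exact fun hc => h2 (hinj (by rw [hc, map_zero]))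
  have h4K : (4 : K) ≠ 0 := by
    have : (4 : K) = 2 * 2 := by norm_num
    rw [this]; exact mul_ne_zero h2K h2K
  have hpdeg : hp.natDegree = 4 := by rw [hhp]; compute_degree!
  have Hpdeg : Hp.natDegree = 4 := by rw [hHp]; compute_degree!
  have hp_ne : hp ≠ 0 := fun h => by simp [h] at hpdeg
  have Hp_ne : Hp ≠ 0 := fun h => by simp [h] at Hpdeg
  have aeval_hp : ∀ x : K, aeval x hp = x ^ 4 - a * x ^ 3 - 6 * x ^ 2 + a * x + 1 := by
    intro x
    rw [hhp]
    simp only [map_add, map_sub, map_mul, map_pow, aeval_X, aeval_C, map_one, map_ofNat, ha]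
  have aeval_Hp : ∀ y : K, aeval y Hp =
      y ^ 4 - (a ^ 2 + 16) * y ^ 2 + 4 * (a ^ 2 + 16) := by
    intro y
    rw [hHp]
    simp only [map_add, map_sub, map_mul, map_pow, aeval_X, aeval_C, map_ofNat, ha]
  apply le_antisymm
  · -- roots of hp lie in adjoin of roots of Hp
    rw [IntermediateField.adjoin_le_iff]
    intro x hx
    rw [mem_rootSet] at hx
    have hxe : x ^ 4 - a * x ^ 3 - 6 * x ^ 2 + a * x + 1 = 0 := by
      rw [← aeval_hp]; exact hx.2
    have hx0 : x ≠ 0 := by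
      intro h
      rw [h] at hxe
      apply one_ne_zero (α := K)
      linear_combination hxe
    set T := IntermediateField.adjoin M (Hp.rootSet K) with hT
    set b : K := (x ^ 2 + 1) / x with hb
    have hbe : b ^ 4 - (a ^ 2 + 16) * b ^ 2 + 4 * (a ^ 2 + 16) = 0 := by
      have key : x ^ 4 * (b ^ 4 - (a ^ 2 + 16) * b ^ 2 + 4 * (a ^ 2 + 16)) =
          (x ^ 4 + a * x ^ 3 - 6 * x ^ 2 - a * x + 1) *
            (x ^ 4 - a * x ^ 3 - 6 * x ^ 2 + a * x + 1) := by
        rw [hb]; field_simp; ring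
      have h0 : x ^ 4 * (b ^ 4 - (a ^ 2 + 16) * b ^ 2 + 4 * (a ^ 2 + 16)) = 0 := by
        rw [key, hxe]; ring
      rcases mul_eq_zero.mp h0 with h | h
      · exact absurd h (pow_ne_zero 4 hx0)
      · exact h
    have hbT : b ∈ T := by
      apply IntermediateField.subset_adjoin
      rw [mem_rootSet]
      exact ⟨Hp_ne, by rw [aeval_Hp]; exact hbe⟩
    have h2T : (2 : K) ∈ T := by
      rw [← map_ofNat (algebraMap M K) 2]
      exact IntermediateField.algebraMap_mem T 2
    show x ∈ (T : Set K)
    rw [SetLike.mem_coe]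
    have hxb : x * b = x ^ 2 + 1 := by
      rw [hb]; field_simp
    by_cases hn0 : n = 0
    · -- n = 0 case
      have ha0 : a = 0 := by rw [ha, hn0, map_zero]
      rw [ha0] at hxe hbe
      have hb8 : b ^ 2 - 8 = 0 := by
        have hsq : (b ^ 2 - 8) ^ 2 = 0 := by linear_combination hbe
        exact pow_eq_zero_iff (two_ne_zero) |>.mp hsq
      have hfac : (x ^ 2 - 2 * x - 1) * (x ^ 2 + 2 * x - 1) = 0 := by
        linear_combination hxe
      rcases mul_eq_zero.mp hfac with h | h
      · have hb2 : b - 2 ≠ 0 := by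
          intro hb2
          rw [sub_eq_zero.mp hb2] at hb8
          exact h4K (by linear_combination -hb8)
        have hxv : x = 2 / (b - 2) := by
          rw [eq_div_iff hb2]
          linear_combination hxb + h
        rw [hxv]
        exact T.div_mem h2T (T.sub_mem hbT h2T)
      · have hb2 : b + 2 ≠ 0 := by
          intro hb2
          rw [eq_neg_of_add_eq_zero_left hb2] at hb8
          exact h4K (by linear_combination -hb8)
        have hxv : x = 2 / (b + 2) := by
          rw [eq_div_iff hb2]
          linear_combination hxb + h
        rw [hxv]
        exact T.div_mem h2T (T.add_mem hbT h2T)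
    · -- n ≠ 0 case
      have ha0 : a ≠ 0 := fun h => hn0 (hinj (by rw [← ha, h, map_zero]))
      have h2a : (2 * a : K) ≠ 0 := mul_ne_zero h2K ha0
      have key : x ^ 2 * (2 * a * x - (a * b + b ^ 2 - 8)) =
          -(x ^ 4 - a * x ^ 3 - 6 * x ^ 2 + a * x + 1) := by
        rw [hb]; field_simp; ring
      have hxv : x = (a * b + b ^ 2 - 8) / (2 * a) := by
        have h0 : x ^ 2 * (2 * a * x - (a * b + b ^ 2 - 8)) = 0 := by
          rw [key, hxe]; ring
        rcases mul_eq_zero.mp h0 with h | h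
        · exact absurd h (pow_ne_zero 2 hx0)
        · rw [eq_div_iff h2a]
          linear_combination h
      rw [hxv]
      have haT : a ∈ T := by rw [ha]; exact IntermediateField.algebraMap_mem T n
      have h8T : (8 : K) ∈ T := by
        rw [← map_ofNat (algebraMap M K) 8]
        exact IntermediateField.algebraMap_mem T 8
      exact T.div_mem
        (T.sub_mem (T.add_mem (mul_mem haT hbT) (pow_mem hbT 2)) h8T)
        (mul_mem h2T haT)
  · -- roots of Hp lie in adjoin of roots of hp
    rw [IntermediateField.adjoin_le_iff]
    intro y hy
    rw [mem_rootSet] at hy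
    have hye : y ^ 4 - (a ^ 2 + 16) * y ^ 2 + 4 * (a ^ 2 + 16) = 0 := by
      rw [← aeval_Hp]; exact hy.2
    set F := IntermediateField.adjoin M (hp.rootSet K) with hF
    show y ∈ (F : Set K)
    rw [SetLike.mem_coe]
    have main : ∀ x : K, x ^ 4 - a * x ^ 3 - 6 * x ^ 2 + a * x + 1 = 0 →
        x ^ 2 - y * x + 1 = 0 → y ∈ F := by
      intro x hxe hq
      have hx0 : x ≠ 0 := by
        intro h
        rw [h] at hq
        apply one_ne_zero (α := K)
        linear_combination hq
      have hxF : x ∈ F := by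
        apply IntermediateField.subset_adjoin
        rw [mem_rootSet]
        exact ⟨hp_ne, by rw [aeval_hp]; exact hxe⟩
      have hyv : y = (x ^ 2 + 1) / x := by
        rw [eq_div_iff hx0]
        linear_combination -hq
      rw [hyv]
      exact F.div_mem (F.add_mem (pow_mem hxF 2) F.one_mem) hxF
    by_cases hn0 : n = 0
    · have ha0 : a = 0 := by rw [ha, hn0, map_zero]
      rw [ha0] at hye
      have hy8 : y ^ 2 - 8 = 0 := by
        have hsq : (y ^ 2 - 8) ^ 2 = 0 := by linear_combination hye
        exact pow_eq_zero_iff (two_ne_zero) |>.mp hsq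
      have hi : (2 : K) * 2⁻¹ = 1 := mul_inv_cancel₀ h2K
      refine main ((y + 2) / 2) ?_ ?_
      · rw [ha0]
        linear_combination (y ^ 2 + 8 * y + 8) * (2 : K)⁻¹ ^ 4 * hy8 + (2 * (2 : K)⁻¹ + 1) *
          (6 * ((y + 2) / 2) ^ 2 - 4 * (2 : K)⁻¹ ^ 2 - 1) * hi
      · linear_combination -(2 : K)⁻¹ ^ 2 * hy8 + (y * (y + 2) * (2 : K)⁻¹ - 2 * (2 : K)⁻¹ - 1) * hi
    · have ha0 : a ≠ 0 := fun h => hn0 (hinj (by rw [← ha, h, map_zero]))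
      have h2a : (2 * a : K) ≠ 0 := mul_ne_zero h2K ha0
      have h16K : (16 : K) * a ^ 4 ≠ 0 := by
        have h16 : (16 : K) ≠ 0 := by
          have : (16 : K) = 2 ^ 4 := by norm_num
          rw [this]; exact pow_ne_zero 4 h2K
        exact mul_ne_zero h16 (pow_ne_zero 4 ha0)
      have h4K2 : (4 : K) * a ^ 2 ≠ 0 := mul_ne_zero h4K (pow_ne_zero 2 ha0)
      set x : K := (a * y + y ^ 2 - 8) / (2 * a) with hxd
      have hx2a : 2 * a * x = a * y + y ^ 2 - 8 := by
        rw [hxd, mul_comm, div_mul_cancel₀ _ h2a]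
      refine main x ?_ ?_
      · have key : 16 * a ^ 4 * (x ^ 4 - a * x ^ 3 - 6 * x ^ 2 + a * x + 1) = 0 := by
          linear_combination (-512 + 64 * a ^ 2 + 8 * a ^ 4 + 192 * y * a + 8 * y * a ^ 3
            + 192 * y ^ 2 - 16 * y ^ 2 * a ^ 2 - 2 * y ^ 2 * a ^ 4 - 48 * y ^ 3 * a
            - 3 * y ^ 3 * a ^ 3 - 24 * y ^ 4 + y ^ 4 * a ^ 2 + 3 * y ^ 5 * a + y ^ 6
            + 128 * x * a - 16 * x * a ^ 3 - 32 * x * y * a ^ 2 - 4 * x * y * a ^ 4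
            - 32 * x * y ^ 2 * a - 2 * x * y ^ 2 * a ^ 3 + 4 * x * y ^ 3 * a ^ 2
            + 2 * x * y ^ 4 * a - 32 * x ^ 2 * a ^ 2 - 8 * x ^ 2 * a ^ 4
            + 4 * x ^ 2 * y * a ^ 3 + 4 * x ^ 2 * y ^ 2 * a ^ 2 + 8 * x ^ 3 * a ^ 3) * hx2a
            + (64 - 12 * a ^ 2 - 32 * y * a + 2 * y * a ^ 3 - 16 * y ^ 2 + 5 * y ^ 2 * a ^ 2
              + 4 * y ^ 3 * a + y ^ 4) * hye
        rcases mul_eq_zero.mp key with h | h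
        · exact absurd h h16K
        · exact h
      · have key : 4 * a ^ 2 * (x ^ 2 - y * x + 1) = 0 := by
          linear_combination (2 * a * x + y ^ 2 - a * y - 8) * hx2a + hye
        rcases mul_eq_zero.mp key with h | h
        · exact absurd h h4K2
        · exact h
end

section
/- Over Q, the simplest quartic polynomials h_2(X) = X^4 - 2X^3 - 6X^2 + 2X + 1 and h_22(X) = X^4 - 22X^3 - 6X^2 + 22X + 1 have the same splitting field. -/
open Polynomial

set_option maxHeartbeats 2000000

/-- The simplest quartics `h₂(X) = X⁴-2X³-6X²+2X+1` and
`h₂₂(X) = X⁴-22X³-6X²+22X+1` have the same splitting field over `ℚ`. -/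
theorem simplest_quartic_2_22 :
    IntermediateField.adjoin ℚ
        ((X ^ 4 - 2 * X ^ 3 - 6 * X ^ 2 + 2 * X + 1 : ℚ[X]).rootSet
          (AlgebraicClosure ℚ)) =
      IntermediateField.adjoin ℚ
        ((X ^ 4 - 22 * X ^ 3 - 6 * X ^ 2 + 22 * X + 1 : ℚ[X]).rootSet
          (AlgebraicClosure ℚ)) := by
  set K := AlgebraicClosure ℚ
  set p2 : ℚ[X] := X ^ 4 - 2 * X ^ 3 - 6 * X ^ 2 + 2 * X + 1 with hp2
  set p22 : ℚ[X] := X ^ 4 - 22 * X ^ 3 - 6 * X ^ 2 + 22 * X + 1 with hp22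
  have hne2 : p2 ≠ 0 := by
    intro h
    simpa [hp2] using congrArg (Polynomial.eval (0 : ℚ)) h
  have hne22 : p22 ≠ 0 := by
    intro h
    simpa [hp22] using congrArg (Polynomial.eval (0 : ℚ)) h
  apply le_antisymm
  · rw [IntermediateField.adjoin_le_iff]
    intro x hx
    rw [Polynomial.mem_rootSet] at hx
    have hx' : x ^ 4 - 2 * x ^ 3 - 6 * x ^ 2 + 2 * x + 1 = 0 := by
      have := hx.2
      simpa [hp2, map_add, map_sub, map_mul, map_pow, map_ofNat] using this
    set y : K := -x ^ 3 + 4 * x ^ 2 - 2 * x with hy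
    have hyroot : y ∈ p22.rootSet K := by
      rw [Polynomial.mem_rootSet]
      refine ⟨hne22, ?_⟩
      have : y ^ 4 - 22 * y ^ 3 - 6 * y ^ 2 + 22 * y + 1 = 0 := by
        rw [hy]
        linear_combination (x ^ 8 - 14 * x ^ 7 + 82 * x ^ 6 - 252 * x ^ 5 +
          415 * x ^ 4 - 348 * x ^ 3 + 162 * x ^ 2 - 46 * x + 1) * hx'
      simpa [hp22, map_add, map_sub, map_mul, map_pow, map_ofNat] using this
    have hymem : y ∈ IntermediateField.adjoin ℚ (p22.rootSet K) :=
      IntermediateField.subset_adjoin ℚ _ hyroot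
    have hxy : x = (12 - 42 * y + 24 * y ^ 2 - y ^ 3) / 25 := by
      rw [eq_div_iff (by norm_num : (25:K) ≠ 0), hy]
      linear_combination (-x ^ 5 + 10 * x ^ 4 - 40 * x ^ 3 + 70 * x ^ 2 - 35 * x - 12) * hx'
    rw [hxy]
    exact div_mem (sub_mem (add_mem (sub_mem (ofNat_mem _ 12)
      (mul_mem (ofNat_mem _ 42) hymem))
      (mul_mem (ofNat_mem _ 24) (pow_mem hymem 2))) (pow_mem hymem 3))
      (ofNat_mem _ 25)
  · rw [IntermediateField.adjoin_le_iff]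
    intro y hy0
    rw [Polynomial.mem_rootSet] at hy0
    have hy' : y ^ 4 - 22 * y ^ 3 - 6 * y ^ 2 + 22 * y + 1 = 0 := by
      have := hy0.2
      simpa [hp22, map_add, map_sub, map_mul, map_pow, map_ofNat] using this
    set x : K := (12 - 42 * y + 24 * y ^ 2 - y ^ 3) / 25 with hxdef
    have h25 : (25 : K) ≠ 0 := by norm_num
    have hx25 : 25 * x = 12 - 42 * y + 24 * y ^ 2 - y ^ 3 := by
      rw [hxdef]; ring
    have hxroot : x ∈ p2.rootSet K := by
      rw [Polynomial.mem_rootSet]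
      refine ⟨hne2, ?_⟩
      have : x ^ 4 - 2 * x ^ 3 - 6 * x ^ 2 + 2 * x + 1 = 0 := by
        have hN : (12 - 42 * y + 24 * y ^ 2 - y ^ 3 : K) = 25 * x := hx25.symm
        linear_combination ((((25*x) ^ 3 + (25*x) ^ 2 * (12 - 42 * y + 24 * y ^ 2 - y ^ 3)
            + (25*x) * (12 - 42 * y + 24 * y ^ 2 - y ^ 3) ^ 2
            + (12 - 42 * y + 24 * y ^ 2 - y ^ 3) ^ 3)
          - 50 * ((25*x) ^ 2 + (25*x) * (12 - 42 * y + 24 * y ^ 2 - y ^ 3)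
            + (12 - 42 * y + 24 * y ^ 2 - y ^ 3) ^ 2)
          - 3750 * ((25*x) + (12 - 42 * y + 24 * y ^ 2 - y ^ 3)) + 31250) / 390625) * hx25
          + (((1:K) * y ^ 8 - 74 * y ^ 7 + 2002 * y ^ 6 - 23812 * y ^ 5
          + 122295 * y ^ 4 - 323108 * y ^ 3 + 495562 * y ^ 2
          - 434746 * y + 159961) / 390625) * hy'
      simpa [hp2, map_add, map_sub, map_mul, map_pow, map_ofNat] using this
    have hxmem : x ∈ IntermediateField.adjoin ℚ (p2.rootSet K) :=
      IntermediateField.subset_adjoin ℚ _ hxroot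
    have hyx : y = -x ^ 3 + 4 * x ^ 2 - 2 * x := by
      linear_combination ((((25*x) ^ 2 + (25*x) * (12 - 42 * y + 24 * y ^ 2 - y ^ 3)
          + (12 - 42 * y + 24 * y ^ 2 - y ^ 3) ^ 2)
          - 100 * ((25*x) + (12 - 42 * y + 24 * y ^ 2 - y ^ 3)) + 1250) / (-15625) ) * hx25
        + ((-y ^ 5 + 50 * y ^ 4 - 760 * y ^ 3 + 3410 * y ^ 2 - 5435 * y + 2328) / 15625) * hy'
    rw [hyx]
    exact sub_mem (add_mem (neg_mem (pow_mem hxmem 3))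
        (mul_mem (ofNat_mem _ 4) (pow_mem hxmem 2)))
      (mul_mem (ofNat_mem _ 2) hxmem)
end
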